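/- Let n ≥ 2, let a, b be real numbers with 1 + 2(n-1)a ≠ 0, and let R be an algebraic curvature tensor on ℝⁿ. Then Ric(D_{a,b}(R)) = -4b·Ric(R)² + (4/n)(2b + (n-2)a)·scal(R)·Ric(R) + [2(n²b² - 2(n-1)(a-b)(1-2b))/(n(1+2(n-1)a))]·|Ric₀(R)|²·id + (4/n²)(a-b)·scal(R)²·id, where Ric(R)² denotes the square of Ric(R) viewed as a symmetric endomorphism of ℝⁿ. -/

import Mathlib

open scoped RealInnerProductSpace

noncomputable section

/-- Euclidean `n`-space. -/
abbrev En (n : ℕ) := EuclideanSpace ℝ (Fin n)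

/-- Quadrilinear-form-valued objects (curvature-type tensors), given by their values. -/
abbrev Curv4 (n : ℕ) := En n → En n → En n → En n → ℝ

/-- Bilinear-form-valued objects, given by their values. -/
abbrev Bil (n : ℕ) := En n → En n → ℝ

/-- The standard orthonormal basis vectors of `En n`. -/
def stdB (n : ℕ) (i : Fin n) : En n := EuclideanSpace.single i 1

/-- `R : Curv4 n` is multilinear, i.e. is the evaluation of a quadrilinear map. -/
def IsMultilinear4 {n : ℕ} (R : Curv4 n) : Prop :=
  ∃ L : En n →ₗ[ℝ] En n →ₗ[ℝ] En n →ₗ[ℝ] En n →ₗ[ℝ] ℝ,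
    ∀ x y z w, R x y z w = L x y z w

/-- `R` is an algebraic curvature tensor: a quadrilinear form which is antisymmetric in the
first two arguments, symmetric under exchange of the two pairs, and satisfies the first
Bianchi identity. -/
def IsAlgCurv {n : ℕ} (R : Curv4 n) : Prop :=
  IsMultilinear4 R ∧
  (∀ x y z w, R x y z w = -R y x z w) ∧
  (∀ x y z w, R x y z w = R z w x y) ∧
  (∀ x y z w, R x y z w + R y z x w + R z x y w = 0)

/-- The Ricci curvature `Ric(R)(x,z) = ∑ₚ R(x,eₚ,z,eₚ)`. -/
def ric {n : ℕ} (R : Curv4 n) : Bil n :=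
  fun x z => ∑ p, R x (stdB n p) z (stdB n p)

/-- The scalar curvature `scal(R) = ∑ᵢ Ric(R)(eᵢ,eᵢ)`. -/
def scal {n : ℕ} (R : Curv4 n) : ℝ :=
  ∑ i, ric R (stdB n i) (stdB n i)

/-- The identity (the standard inner product) as a bilinear form. -/
def idB (n : ℕ) : Bil n := fun x z => ⟪x, z⟫

/-- The trace-free Ricci tensor `Ric₀(R) = Ric(R) - (scal(R)/n)·id`. -/
def ric0 {n : ℕ} (R : Curv4 n) : Bil n :=
  fun x z => ric R x z - scal R / n * ⟪x, z⟫

/-- The square of a bilinear form, viewed as a symmetric endomorphism: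
`B²(x,z) = ∑ₚ B(x,eₚ)·B(eₚ,z)`. -/
def bilSq {n : ℕ} (B : Bil n) : Bil n :=
  fun x z => ∑ p, B x (stdB n p) * B (stdB n p) z

/-- The squared Frobenius norm `|B|² = tr(B²)` of a bilinear form. -/
def bilNormSq {n : ℕ} (B : Bil n) : ℝ :=
  ∑ i, bilSq B (stdB n i) (stdB n i)

/-- The Kulkarni–Nomizu product of two bilinear forms:
`(A ∧ B)(x,y,z,w) = A(x,z)B(y,w) - A(x,w)B(y,z) - A(y,z)B(x,w) + A(y,w)B(x,z)`. -/
def KN {n : ℕ} (A B : Bil n) : Curv4 n :=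
  fun x y z w => A x z * B y w - A x w * B y z - A y z * B x w + A y w * B x z

/-- Böhm–Wilking's error term
`D_{a,b}(R) = (2b+(n-2)b²-2a)·Ric₀∧Ric₀ + 2a·Ric∧Ric + 2b²·Ric₀²∧id
  + ((nb²(1-2b)-2(a-b)(1-2b+nb²))/(n(1+2(n-1)a)))·|Ric₀|²·id∧id`. -/
def Dab {n : ℕ} (a b : ℝ) (R : Curv4 n) : Curv4 n :=
  fun x y z w =>
    (2 * b + ((n : ℝ) - 2) * b ^ 2 - 2 * a) * KN (ric0 R) (ric0 R) x y z w +
      2 * a * KN (ric R) (ric R) x y z w +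
      2 * b ^ 2 * KN (bilSq (ric0 R)) (idB n) x y z w +
      ((n : ℝ) * b ^ 2 * (1 - 2 * b) - 2 * (a - b) * (1 - 2 * b + (n : ℝ) * b ^ 2)) /
          ((n : ℝ) * (1 + 2 * ((n : ℝ) - 1) * a)) * bilNormSq (ric0 R) *
        KN (idB n) (idB n) x y z w

/-- Böhm–Wilking's linear map
`l_{a,b}(R) = R + b·Ric(R)∧id + (1/n)(a-b)·scal(R)·id∧id`. -/
def lab {n : ℕ} (a b : ℝ) (R : Curv4 n) : Curv4 n :=
  fun x y z w =>
    R x y z w + b * KN (ric R) (idB n) x y z w +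
      1 / (n : ℝ) * (a - b) * scal R * KN (idB n) (idB n) x y z w

end


section helpers
variable {n : ℕ}

lemma inner_stdB_left (p : Fin n) (z : En n) : ⟪stdB n p, z⟫ = z p := by
  simp [stdB, EuclideanSpace.inner_single_left]

lemma inner_stdB_right (x : En n) (p : Fin n) : ⟪x, stdB n p⟫ = x p := by
  simp [stdB, EuclideanSpace.inner_single_right]

lemma stdB_inner_self (p : Fin n) : ⟪stdB n p, stdB n p⟫ = (1 : ℝ) := by
  rw [inner_stdB_left]; simp [stdB, EuclideanSpace.single_apply]

lemma sum_coord_smul (z : En n) : ∑ p, z p • stdB n p = z := by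
  ext i
  have h : (∑ p, z p • stdB n p) i = ∑ p, (z p • stdB n p) i := by
    rw [WithLp.ofLp_sum]; exact Finset.sum_apply i _ _
  rw [h]
  simp [stdB, EuclideanSpace.single_apply, mul_comm]

lemma inner_expand (x z : En n) : ∑ p, ⟪x, stdB n p⟫ * ⟪stdB n p, z⟫ = ⟪x, z⟫ := by
  simp [stdB, EuclideanSpace.inner_single_left, EuclideanSpace.inner_single_right,
    PiLp.inner_apply, RCLike.inner_apply, mul_comm]

lemma lin3 (L : En n →ₗ[ℝ] En n →ₗ[ℝ] En n →ₗ[ℝ] En n →ₗ[ℝ] ℝ) (x y z w : En n) :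
    ∑ p, z p * L x y (stdB n p) w = L x y z w := by
  conv_rhs => rw [← sum_coord_smul z]
  rw [map_sum (L x y), LinearMap.sum_apply]
  refine Finset.sum_congr rfl fun p _ => ?_
  rw [map_smul, LinearMap.smul_apply, smul_eq_mul]

lemma lin1 (L : En n →ₗ[ℝ] En n →ₗ[ℝ] En n →ₗ[ℝ] En n →ₗ[ℝ] ℝ) (x y z w : En n) :
    ∑ p, x p * L (stdB n p) y z w = L x y z w := by
  conv_rhs => rw [← sum_coord_smul x]
  rw [map_sum L]
  simp only [LinearMap.sum_apply]
  refine Finset.sum_congr rfl fun p _ => ?_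
  rw [map_smul]
  simp only [LinearMap.smul_apply, smul_eq_mul]

end helpers

/-- for `n ≥ 2`, reals `a, b` with `1+2(n-1)a ≠ 0`, and any algebraic
curvature tensor `R` on `ℝⁿ`,
`Ric(D_{a,b}(R)) = -4b·Ric(R)² + (4/n)(2b+(n-2)a)·scal(R)·Ric(R)
  + (2(n²b²-2(n-1)(a-b)(1-2b))/(n(1+2(n-1)a)))·|Ric₀(R)|²·id + (4/n²)(a-b)·scal(R)²·id`. -/
theorem stmt_13 (n : ℕ) (hn : 2 ≤ n) (a b : ℝ)
    (hab : 1 + 2 * ((n : ℝ) - 1) * a ≠ 0)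
    (R : Curv4 n) (hR : IsAlgCurv R) :
    ∀ x z : En n,
      ric (Dab a b R) x z =
        -4 * b * bilSq (ric R) x z +
          4 / (n : ℝ) * (2 * b + ((n : ℝ) - 2) * a) * scal R * ric R x z +
          2 * ((n : ℝ) ^ 2 * b ^ 2 - 2 * ((n : ℝ) - 1) * (a - b) * (1 - 2 * b)) /
              ((n : ℝ) * (1 + 2 * ((n : ℝ) - 1) * a)) * bilNormSq (ric0 R) * ⟪x, z⟫ +
          4 / (n : ℝ) ^ 2 * (a - b) * scal R ^ 2 * ⟪x, z⟫ := by
  obtain ⟨⟨L, hL⟩, -, -, -⟩ := hR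
  have hn0 : (n : ℝ) ≠ 0 := by
    have h : 0 < n := lt_of_lt_of_le (by norm_num) hn
    exact_mod_cast h.ne'
  -- linearity of `ric R` in each slot
  have hricI1 : ∀ x z : En n, ∑ p, ric R x (stdB n p) * ⟪stdB n p, z⟫ = ric R x z := by
    intro x z
    simp only [ric, hL, inner_stdB_left, Finset.sum_mul]
    rw [Finset.sum_comm]
    refine Finset.sum_congr rfl fun q _ => ?_
    rw [← lin3 L x (stdB n q) z (stdB n q)]
    exact Finset.sum_congr rfl fun p _ => by ring
  have hricI2 : ∀ x z : En n, ∑ p, ⟪x, stdB n p⟫ * ric R (stdB n p) z = ric R x z := by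
    intro x z
    simp only [ric, hL, inner_stdB_right, Finset.mul_sum]
    rw [Finset.sum_comm]
    refine Finset.sum_congr rfl fun q _ => ?_
    exact lin1 L x (stdB n q) z (stdB n q)
  -- linearity of `ric0 R` in each slot
  have hric0I1 : ∀ x z : En n, ∑ p, ric0 R x (stdB n p) * ⟪stdB n p, z⟫ = ric0 R x z := by
    intro x z
    simp only [ric0, sub_mul]
    rw [Finset.sum_sub_distrib, hricI1]
    congr 1
    rw [mul_comm (scal R / n) ⟪x, z⟫, ← inner_expand x z, Finset.sum_mul]
    exact Finset.sum_congr rfl fun p _ => by ring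
  have hric0I2 : ∀ x z : En n, ∑ p, ⟪x, stdB n p⟫ * ric0 R (stdB n p) z = ric0 R x z := by
    intro x z
    simp only [ric0, mul_sub]
    rw [Finset.sum_sub_distrib, hricI2]
    congr 1
    rw [mul_comm (scal R / n) ⟪x, z⟫, ← inner_expand x z, Finset.sum_mul]
    exact Finset.sum_congr rfl fun p _ => by ring
  -- linearity of `bilSq (ric0 R)` in each slot
  have hbq0I1 : ∀ x z : En n,
      ∑ p, bilSq (ric0 R) x (stdB n p) * ⟪stdB n p, z⟫ = bilSq (ric0 R) x z := by
    intro x z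
    simp only [bilSq, Finset.sum_mul]
    rw [Finset.sum_comm]
    refine Finset.sum_congr rfl fun q _ => ?_
    have h : ∑ p, ric0 R x (stdB n q) * ric0 R (stdB n q) (stdB n p) * ⟪stdB n p, z⟫
        = ric0 R x (stdB n q) * ∑ p, ric0 R (stdB n q) (stdB n p) * ⟪stdB n p, z⟫ := by
      rw [Finset.mul_sum]; exact Finset.sum_congr rfl fun p _ => by ring
    rw [h, hric0I1]
  have hbq0I2 : ∀ x z : En n,
      ∑ p, ⟪x, stdB n p⟫ * bilSq (ric0 R) (stdB n p) z = bilSq (ric0 R) x z := by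
    intro x z
    simp only [bilSq, Finset.mul_sum]
    rw [Finset.sum_comm]
    refine Finset.sum_congr rfl fun q _ => ?_
    have h : ∑ p, ⟪x, stdB n p⟫ * (ric0 R (stdB n p) (stdB n q) * ric0 R (stdB n q) z)
        = (∑ p, ⟪x, stdB n p⟫ * ric0 R (stdB n p) (stdB n q)) * ric0 R (stdB n q) z := by
      rw [Finset.sum_mul]; exact Finset.sum_congr rfl fun p _ => by ring
    rw [h, hric0I2]
  -- traces
  have htr0 : (∑ i, ric0 R (stdB n i) (stdB n i)) = 0 := by
    simp only [ric0, stdB_inner_self, mul_one]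
    rw [Finset.sum_sub_distrib]
    simp only [Finset.sum_const, Finset.card_univ, Fintype.card_fin, nsmul_eq_mul]
    have h : (∑ i, ric R (stdB n i) (stdB n i)) = scal R := rfl
    rw [h]
    field_simp
    ring
  have htrid : (∑ i, (⟪stdB n i, stdB n i⟫ : ℝ)) = (n : ℝ) := by
    rw [Finset.sum_congr rfl fun i _ => stdB_inner_self i]
    simp
  -- Ricci of a Kulkarni–Nomizu product
  have hKN : ∀ A B : Bil n, ∀ x z : En n,
      ∑ p, KN A B x (stdB n p) z (stdB n p)
        = A x z * (∑ i, B (stdB n i) (stdB n i)) + (∑ i, A (stdB n i) (stdB n i)) * B x z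
          - (∑ p, A x (stdB n p) * B (stdB n p) z)
          - ∑ p, A (stdB n p) z * B x (stdB n p) := by
    intro A B x z
    simp only [KN]
    rw [Finset.sum_add_distrib, Finset.sum_sub_distrib, Finset.sum_sub_distrib,
      ← Finset.mul_sum, ← Finset.sum_mul]
    ring
  intro x z
  -- the four Kulkarni–Nomizu Ricci contractions
  have hT1 : ∑ p, KN (ric0 R) (ric0 R) x (stdB n p) z (stdB n p)
      = -2 * bilSq (ric0 R) x z := by
    rw [hKN, htr0]
    have h1 : ∑ p, ric0 R x (stdB n p) * ric0 R (stdB n p) z = bilSq (ric0 R) x z := rfl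
    have h2 : ∑ p, ric0 R (stdB n p) z * ric0 R x (stdB n p) = bilSq (ric0 R) x z := by
      rw [← h1]; exact Finset.sum_congr rfl fun p _ => mul_comm _ _
    rw [h1, h2]; ring
  have hT2 : ∑ p, KN (ric R) (ric R) x (stdB n p) z (stdB n p)
      = 2 * scal R * ric R x z - 2 * bilSq (ric R) x z := by
    rw [hKN]
    have h0 : (∑ i, ric R (stdB n i) (stdB n i)) = scal R := rfl
    have h1 : ∑ p, ric R x (stdB n p) * ric R (stdB n p) z = bilSq (ric R) x z := rfl
    have h2 : ∑ p, ric R (stdB n p) z * ric R x (stdB n p) = bilSq (ric R) x z := by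
      rw [← h1]; exact Finset.sum_congr rfl fun p _ => mul_comm _ _
    rw [h0, h1, h2]; ring
  have hT3 : ∑ p, KN (bilSq (ric0 R)) (idB n) x (stdB n p) z (stdB n p)
      = ((n : ℝ) - 2) * bilSq (ric0 R) x z + bilNormSq (ric0 R) * ⟪x, z⟫ := by
    rw [hKN]
    simp only [idB]
    rw [htrid]
    have h0 : (∑ i, bilSq (ric0 R) (stdB n i) (stdB n i)) = bilNormSq (ric0 R) := rfl
    have h2 : ∑ p, bilSq (ric0 R) (stdB n p) z * ⟪x, stdB n p⟫ = bilSq (ric0 R) x z := by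
      rw [← hbq0I2 x z]; exact Finset.sum_congr rfl fun p _ => mul_comm _ _
    rw [h0, hbq0I1, h2]; ring
  have hT4 : ∑ p, KN (idB n) (idB n) x (stdB n p) z (stdB n p)
      = 2 * ((n : ℝ) - 1) * ⟪x, z⟫ := by
    rw [hKN]
    simp only [idB]
    rw [htrid, inner_expand]
    have h2 : ∑ p, (⟪stdB n p, z⟫ : ℝ) * ⟪x, stdB n p⟫ = ⟪x, z⟫ := by
      rw [← inner_expand x z]; exact Finset.sum_congr rfl fun p _ => mul_comm _ _
    rw [h2]; ring
  -- `bilSq (ric0 R)` in terms of `bilSq (ric R)`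
  have hsq : bilSq (ric0 R) x z
      = bilSq (ric R) x z - 2 * (scal R / n) * ric R x z + (scal R / n) ^ 2 * ⟪x, z⟫ := by
    conv_lhs => simp only [bilSq, ric0]
    have h : ∀ p : Fin n,
        (ric R x (stdB n p) - scal R / n * ⟪x, stdB n p⟫)
            * (ric R (stdB n p) z - scal R / n * ⟪stdB n p, z⟫)
          = ric R x (stdB n p) * ric R (stdB n p) z
            - scal R / n * (⟪x, stdB n p⟫ * ric R (stdB n p) z)
            - scal R / n * (ric R x (stdB n p) * ⟪stdB n p, z⟫)
            + (scal R / n) ^ 2 * (⟪x, stdB n p⟫ * ⟪stdB n p, z⟫) := fun p => by ring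
    rw [Finset.sum_congr rfl fun p _ => h p]
    rw [Finset.sum_add_distrib, Finset.sum_sub_distrib, Finset.sum_sub_distrib,
      ← Finset.mul_sum, ← Finset.mul_sum, ← Finset.mul_sum]
    rw [hricI1, hricI2, inner_expand]
    have h0 : ∑ p, ric R x (stdB n p) * ric R (stdB n p) z = bilSq (ric R) x z := rfl
    rw [h0]; ring
  -- expand the Ricci curvature of `Dab`
  show (∑ p, Dab a b R x (stdB n p) z (stdB n p)) = _
  have hD : ∑ p, Dab a b R x (stdB n p) z (stdB n p)
      = (2 * b + ((n : ℝ) - 2) * b ^ 2 - 2 * a)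
            * ∑ p, KN (ric0 R) (ric0 R) x (stdB n p) z (stdB n p)
        + 2 * a * ∑ p, KN (ric R) (ric R) x (stdB n p) z (stdB n p)
        + 2 * b ^ 2 * ∑ p, KN (bilSq (ric0 R)) (idB n) x (stdB n p) z (stdB n p)
        + ((n : ℝ) * b ^ 2 * (1 - 2 * b) - 2 * (a - b) * (1 - 2 * b + (n : ℝ) * b ^ 2)) /
              ((n : ℝ) * (1 + 2 * ((n : ℝ) - 1) * a)) * bilNormSq (ric0 R)
            * ∑ p, KN (idB n) (idB n) x (stdB n p) z (stdB n p) := by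
    simp only [Dab]
    rw [Finset.sum_add_distrib, Finset.sum_add_distrib, Finset.sum_add_distrib,
      ← Finset.mul_sum, ← Finset.mul_sum, ← Finset.mul_sum, ← Finset.mul_sum]
  rw [hD, hT1, hT2, hT3, hT4, hsq]
  generalize hd : 1 + 2 * ((n : ℝ) - 1) * a = d at hab ⊢
  field_simp
  subst hd
  ring
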